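/- Suppose λ is an infinite cardinal that is not Fréchet, and suppose that for every infinite cardinal μ < λ the set Un_{≤μ} of countably complete tail-uniform ultrafilters on ordinals ≤ μ has cardinality at most (2^μ)⁺. Then the set Un_{≤λ} of countably complete tail-uniform ultrafilters on ordinals ≤ λ has cardinality at most (2^λ)⁺. -/

import Mathlib

/-- An ultrafilter is countably complete if every countable family of sets in it
has its intersection in it. -/
def CountablyComplete {X : Type*} (U : Ultrafilter X) : Prop :=
  ∀ s : Set (Set X), s.Countable → (∀ t ∈ s, t ∈ U) → ⋂₀ s ∈ U

/-- An ultrafilter on a set `X` is Fréchet uniform if every set in it has full cardinality. -/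
def FrechetUniform {X : Type*} (U : Ultrafilter X) : Prop :=
  ∀ A ∈ U, Cardinal.mk A = Cardinal.mk X

/-- A cardinal is Fréchet if it carries a countably complete Fréchet uniform ultrafilter. -/
def IsFrechet (l : Cardinal) : Prop :=
  ∃ U : Ultrafilter l.out, CountablyComplete U ∧ FrechetUniform U

/-- `U` is (the canonical extension to `Ordinal` of) a tail-uniform ultrafilter on the
ordinal `γ`: it concentrates on `{ξ : ξ < γ}` and contains every final segment
`{ξ : β ≤ ξ < γ}` for `β < γ`. -/
def TailUniformOn (γ : Ordinal) (U : Ultrafilter Ordinal) : Prop :=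
  Set.Iio γ ∈ U ∧ ∀ β < γ, Set.Ico β γ ∈ U

/-- `Un_{≤β}`: the countably complete tail-uniform ultrafilters on ordinals `≤ β`. -/
def UnLE (β : Ordinal) : Set (Ultrafilter Ordinal) :=
  {U | ∃ γ ≤ β, CountablyComplete U ∧ TailUniformOn γ U}

open Cardinal Set
open scoped Classical

/-- Countable completeness is preserved by pushforward. -/
theorem countablyComplete_map {X Y : Type*} {U : Ultrafilter X} (h : CountablyComplete U)
    (f : X → Y) : CountablyComplete (U.map f) := by
  intro s hs hmem
  have h1 : (⋂₀ ((fun t => f ⁻¹' t) '' s)) ∈ U := by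
    apply h _ (hs.image _)
    rintro t ⟨t', ht', rfl⟩
    exact (Ultrafilter.mem_map).1 (hmem t' ht')
  rw [Ultrafilter.mem_map, Set.preimage_sInter]
  rwa [Set.sInter_image] at h1

/-- If a singleton belongs to an ultrafilter, the ultrafilter is principal. -/
theorem eq_pure_of_singleton_mem {X : Type*} {U : Ultrafilter X} {a : X}
    (h : {a} ∈ U) : U = pure a := by
  ext S
  simp only [Ultrafilter.mem_pure]
  constructor
  · intro hS
    by_contra ha
    have hdisj : S ∩ {a} = (∅ : Set X) := by
      ext x
      simp only [Set.mem_inter_iff, Set.mem_singleton_iff, Set.mem_empty_iff_false, iff_false,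
        not_and]
      rintro hx rfl
      exact ha hx
    have hint : S ∩ {a} ∈ U := Filter.inter_mem hS h
    rw [hdisj] at hint
    exact (Filter.nonempty_of_mem hint).ne_empty rfl
  · intro ha
    exact Filter.mem_of_superset h (by simpa using ha)

/-- Any ultrafilter on `Ordinal` concentrating below `o` is tail-uniform on some `γ ≤ o`. -/
theorem exists_tailUniformOn (q : Ultrafilter Ordinal) {o : Ordinal} (h : Set.Iio o ∈ q) :
    ∃ γ ≤ o, TailUniformOn γ q := by
  set s : Set Ordinal := {γ | Set.Iio γ ∈ q} with hs
  have hne : s.Nonempty := ⟨o, h⟩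
  have hmem : Set.Iio (sInf s) ∈ q := csInf_mem hne
  refine ⟨sInf s, csInf_le (OrderBot.bddBelow s) h, hmem, ?_⟩
  intro β hβ
  have hβs : Set.Iio β ∉ q := fun hm => ((csInf_le (OrderBot.bddBelow s) hm).not_gt hβ)
  have h2 : (Set.Iio β)ᶜ ∈ q := (Ultrafilter.compl_mem_iff_notMem).2 hβs
  have h3 := Filter.inter_mem hmem h2
  have : Set.Iio (sInf s) ∩ (Set.Iio β)ᶜ = Set.Ico β (sInf s) := by
    ext x
    simp only [Set.mem_inter_iff, Set.mem_Iio, Set.mem_compl_iff, not_lt, Set.mem_Ico]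
    tauto
  rwa [this] at h3

/-- The canonical "collapse" of a set of ordinals of cardinality `μ` onto `Iio μ.ord`. -/
noncomputable def theBij (A : Set Ordinal) (μ : Cardinal) : Ordinal → Ordinal :=
  fun x =>
    if h : Nonempty (↥A ≃ ↥(Set.Iio μ.ord)) then
      (if hx : x ∈ A then ((h.some ⟨x, hx⟩ : ↥(Set.Iio μ.ord)) : Ordinal) else 0)
    else 0

theorem mem_iff_image_mem {A : Set Ordinal} {μ : Cardinal}
    (hne : Nonempty (↥A ≃ ↥(Set.Iio μ.ord))) (U : Ultrafilter Ordinal) (hA : A ∈ U)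
    (S : Set Ordinal) :
    S ∈ U ↔ theBij A μ '' (S ∩ A) ∈ U.map (theBij A μ) := by
  rw [Ultrafilter.mem_map]
  constructor
  · intro hS
    exact Filter.mem_of_superset (Filter.inter_mem hS hA) (Set.subset_preimage_image _ _)
  · intro hpre
    have hsub : (theBij A μ ⁻¹' (theBij A μ '' (S ∩ A))) ∩ A ⊆ S := by
      rintro x ⟨hx, hxA⟩
      obtain ⟨y, ⟨hyS, hyA⟩, hxy⟩ := hx
      have hy : y = x := by
        unfold theBij at hxy
        rw [dif_pos hne, dif_pos hne, dif_pos hyA, dif_pos hxA] at hxy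
        have h1 : hne.some ⟨y, hyA⟩ = hne.some ⟨x, hxA⟩ := Subtype.coe_injective hxy
        have h2 : (⟨y, hyA⟩ : ↥A) = ⟨x, hxA⟩ := hne.some.injective h1
        exact congrArg Subtype.val h2
      rwa [hy] at hyS
    exact Filter.mem_of_superset (Filter.inter_mem hpre hA) hsub


theorem key_data (l : Cardinal.{0}) (hl : Cardinal.aleph0 ≤ l) (hnf : ¬ IsFrechet l)
    (U : Ultrafilter Ordinal.{0}) (hUn : U ∈ UnLE l.ord) (hnp : ∀ x, U ≠ pure x) :
    ∃ (A : Set Ordinal) (μ : Cardinal), A ⊆ Set.Iio l.ord ∧ A ∈ U ∧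
      Nonempty (↥A ≃ ↥(Set.Iio μ.ord)) ∧ Cardinal.aleph0 ≤ μ ∧ μ < l ∧
      U.map (theBij A μ) ∈ UnLE μ.ord := by
  classical
  obtain ⟨γ, hγle, hcc, hIioγ, -⟩ := hUn
  -- the set of cardinalities of members contained in `Iio l.ord`
  set SU : Set Cardinal.{0} :=
    {c | ∃ A : Set Ordinal, A ∈ U ∧ A ⊆ Set.Iio l.ord ∧ #↥A = Cardinal.lift.{1,0} c} with hSU
  have hSUne : SU.Nonempty := by
    refine ⟨γ.card, Set.Iio γ, hIioγ, fun x hx => lt_of_lt_of_le hx hγle, ?_⟩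
    exact Ordinal.mk_Iio_ordinal γ
  set μ := sInf SU with hμ
  obtain ⟨A, hAU, hAsub, hAcard⟩ : μ ∈ SU := csInf_mem hSUne
  have hmin : ∀ c ∈ SU, μ ≤ c := fun c hc => csInf_le (OrderBot.bddBelow SU) hc
  -- μ is infinite
  have hμinf : Cardinal.aleph0 ≤ μ := by
    by_contra hfin
    have hcnt : A.Countable := by
      rw [← Set.countable_coe_iff]
      rw [← Cardinal.mk_le_aleph0_iff]
      rw [hAcard, ← Cardinal.lift_aleph0.{1,0}]
      exact Cardinal.lift_le.2 (le_of_not_ge hfin)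
    have hF : ((fun a => ({a} : Set Ordinal)ᶜ) '' A).Countable := hcnt.image _
    have hFU : ∀ t ∈ (fun a => ({a} : Set Ordinal)ᶜ) '' A, t ∈ U := by
      rintro t ⟨a, -, rfl⟩
      refine (Ultrafilter.compl_mem_iff_notMem).2 fun hsing => ?_
      exact hnp a (eq_pure_of_singleton_mem hsing)
    have hint := hcc _ hF hFU
    have hempty : (⋂₀ ((fun a => ({a} : Set Ordinal)ᶜ) '' A)) ∩ A = ∅ := by
      ext x
      simp only [Set.mem_inter_iff, Set.mem_sInter, Set.mem_image, Set.mem_empty_iff_false,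
        iff_false, not_and]
      intro hall hxA
      exact (hall _ ⟨x, hxA, rfl⟩) rfl
    have := Filter.inter_mem hint hAU
    rw [hempty] at this
    exact (Filter.nonempty_of_mem this).ne_empty rfl
  -- μ ≤ l
  have hμlel : μ ≤ l := by
    have h1 : #↥A ≤ #↥(Set.Iio l.ord) := Cardinal.mk_le_mk_of_subset hAsub
    rw [hAcard, Ordinal.mk_Iio_ordinal, Cardinal.card_ord] at h1
    exact Cardinal.lift_le.1 h1
  -- μ ≠ l, else l would be Fréchet
  have hμnel : μ ≠ l := by
    intro hμl
    apply hnf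
    have hAne : Nonempty (↥A) := by
      rw [← Cardinal.mk_ne_zero_iff, hAcard]
      simp only [ne_eq, Cardinal.lift_eq_zero]
      intro h0
      rw [h0] at hμinf
      exact (Cardinal.aleph0_pos).not_ge hμinf
    have hg : Nonempty (↥A ≃ l.out) := by
      rw [← Cardinal.lift_mk_eq'.{1,0}]
      rw [Cardinal.mk_out, Cardinal.lift_uzero, hAcard, hμl]
    obtain ⟨g⟩ := hg
    set e : Ordinal → l.out := fun x => if hx : x ∈ A then g ⟨x, hx⟩ else g (Classical.arbitrary _)
      with he
    refine ⟨U.map e, countablyComplete_map hcc e, ?_⟩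
    intro B hB
    have hpre : e ⁻¹' B ∈ U := (Ultrafilter.mem_map).1 hB
    set C : Set Ordinal := (e ⁻¹' B) ∩ A with hC
    have hCU : C ∈ U := Filter.inter_mem hpre hAU
    have hCsub : C ⊆ Set.Iio l.ord := fun x hx => hAsub hx.2
    obtain ⟨c, hc⟩ : ∃ c : Cardinal.{0}, Cardinal.lift.{1,0} c = #↥C := by
      apply Cardinal.mem_range_lift_of_le
      calc #↥C ≤ #↥(Set.Iio l.ord) := Cardinal.mk_le_mk_of_subset hCsub
      _ = Cardinal.lift.{1,0} l := by rw [Ordinal.mk_Iio_ordinal, Cardinal.card_ord]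
    have hcSU : c ∈ SU := ⟨C, hCU, hCsub, hc.symm⟩
    have hlc : l ≤ c := hμl ▸ hmin c hcSU
    -- inject C into B
    have hinj : Nonempty (↥C ↪ ↥B) := by
      refine ⟨⟨fun x => ⟨g ⟨x.1, x.2.2⟩, ?_⟩, ?_⟩⟩
      · have hmem : e x.1 ∈ B := x.2.1
        simp only [he] at hmem
        rwa [dif_pos x.2.2] at hmem
      · rintro ⟨x, hx⟩ ⟨y, hy⟩ hxy
        have h1 : g ⟨x, hx.2⟩ = g ⟨y, hy.2⟩ := congrArg Subtype.val hxy
        have h2 := g.injective h1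
        have h3 : x = y := congrArg Subtype.val h2
        exact Subtype.ext h3
    have hCB : Cardinal.lift.{0,1} #↥C ≤ Cardinal.lift.{1,0} #↥B :=
      Cardinal.lift_mk_le'.2 hinj
    rw [Cardinal.lift_uzero, ← hc] at hCB
    have hlB : l ≤ #↥B := by
      have := (Cardinal.lift_le.1 hCB)
      exact le_trans hlc this
    have hBl : #↥B ≤ l := by
      calc #↥B ≤ #l.out := Cardinal.mk_set_le B
      _ = l := Cardinal.mk_out l
    rw [Cardinal.mk_out]
    exact le_antisymm hBl hlB
  have hμltl : μ < l := lt_of_le_of_ne hμlel hμnel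
  -- the collapse
  have hne : Nonempty (↥A ≃ ↥(Set.Iio μ.ord)) := by
    rw [← Cardinal.eq]
    rw [hAcard, Ordinal.mk_Iio_ordinal, Cardinal.card_ord]
  refine ⟨A, μ, hAsub, hAU, hne, hμinf, hμltl, ?_⟩
  -- the image ultrafilter is in UnLE μ.ord
  have hIio : Set.Iio μ.ord ∈ U.map (theBij A μ) := by
    rw [Ultrafilter.mem_map]
    refine Filter.mem_of_superset hAU fun x hx => ?_
    simp only [Set.mem_preimage, theBij, dif_pos hne, dif_pos hx, Set.mem_Iio]
    exact (hne.some ⟨x, hx⟩).2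
  obtain ⟨γ', hγ'le, htail⟩ := exists_tailUniformOn (U.map (theBij A μ)) hIio
  exact ⟨γ', hγ'le, countablyComplete_map hcc _, htail⟩

/-- If the infinite cardinal `λ` is not Fréchet and `|Un_{≤μ}| ≤ (2^μ)⁺` for every
infinite cardinal `μ < λ`, then `|Un_{≤λ}| ≤ (2^λ)⁺`. -/
theorem statement10 (l : Cardinal) (hl : Cardinal.aleph0 ≤ l) (hnf : ¬ IsFrechet l)
    (hih : ∀ μ : Cardinal, Cardinal.aleph0 ≤ μ → μ < l →
      Cardinal.mk (UnLE μ.ord) ≤ Cardinal.lift.{1,0} (Order.succ (2 ^ μ))) :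
    Cardinal.mk (UnLE l.ord) ≤ Cardinal.lift.{1,0} (Order.succ (2 ^ l)) := by
  classical
  set S2 : Cardinal.{1} := Cardinal.lift.{1,0} (Order.succ (2 ^ l)) with hS2def
  have hlS : l ≤ Order.succ (2 ^ l) := le_trans (Cardinal.cantor l).le (Order.le_succ _)
  have h2S : (2 : Cardinal.{0}) ^ l ≤ Order.succ (2 ^ l) := Order.le_succ _
  have hS2inf : Cardinal.aleph0 ≤ S2 := by
    rw [hS2def, ← Cardinal.lift_aleph0.{1,0}]
    exact Cardinal.lift_le.2 (le_trans hl hlS)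
  set P : Set (Ultrafilter Ordinal.{0}) := {U | U ∈ UnLE l.ord ∧ ∃ x, U = pure x} with hPdef
  set N : Set (Ultrafilter Ordinal.{0}) := {U | U ∈ UnLE l.ord ∧ ¬ ∃ x, U = pure x} with hNdef
  have hcover : UnLE l.ord ⊆ P ∪ N := by
    intro U hU
    by_cases h : ∃ x, U = pure x
    · exact Or.inl ⟨hU, h⟩
    · exact Or.inr ⟨hU, h⟩
  have hmk : #↥(UnLE l.ord) ≤ #↥P + #↥N :=
    le_trans (Cardinal.mk_le_mk_of_subset hcover) (Cardinal.mk_union_le P N)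
  -- principal part
  have hPx : ∀ U : Ultrafilter Ordinal.{0}, U ∈ P → ∃ x : Ordinal, U = pure x ∧ x < l.ord := by
    rintro U ⟨⟨γ, hγle, -, hIio, -⟩, x, rfl⟩
    refine ⟨x, rfl, lt_of_lt_of_le ?_ hγle⟩
    simpa using hIio
  have hP : #↥P ≤ Cardinal.lift.{1,0} l := by
    have h1 : #↥P ≤ #↥(Set.Iio l.ord) := by
      refine Cardinal.mk_le_of_injective
        (f := fun U : ↥P => (⟨(hPx U.1 U.2).choose, (hPx U.1 U.2).choose_spec.2⟩ :
          ↥(Set.Iio l.ord))) ?_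
      intro U V hUV
      have h2 : (hPx U.1 U.2).choose = (hPx V.1 V.2).choose := congrArg Subtype.val hUV
      apply Subtype.ext
      rw [(hPx U.1 U.2).choose_spec.1, (hPx V.1 V.2).choose_spec.1, h2]
    rwa [Ordinal.mk_Iio_ordinal, Cardinal.card_ord] at h1
  -- nonprincipal part
  have hkey : ∀ U : ↥N, ∃ (A : Set Ordinal.{0}) (μ : Cardinal.{0}), A ⊆ Set.Iio l.ord ∧
      A ∈ U.1 ∧ Nonempty (↥A ≃ ↥(Set.Iio μ.ord)) ∧ Cardinal.aleph0 ≤ μ ∧ μ < l ∧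
      (U.1).map (theBij A μ) ∈ UnLE μ.ord := by
    intro U
    exact key_data l hl hnf U.1 U.2.1 (fun x h => U.2.2 ⟨x, h⟩)
  choose A μ hsub hmem hne hinf hlt hq using hkey
  set I : Type 1 := {c : Cardinal.{0} // Cardinal.aleph0 ≤ c ∧ c < l} with hIdef
  set T : Type 1 := Set (↥(Set.Iio l.ord)) × ((c : I) × ↥(UnLE (c.1).ord)) with hTdef
  set Φ : ↥N → T := fun U =>
    ⟨{x : ↥(Set.Iio l.ord) | (x : Ordinal) ∈ A U},
      ⟨⟨μ U, hinf U, hlt U⟩, ⟨(U.1).map (theBij (A U) (μ U)), hq U⟩⟩⟩ with hΦdef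
  have hΦinj : Function.Injective Φ := by
    intro U V hUV
    have hA : A U = A V := by
      have h1 : {x : ↥(Set.Iio l.ord) | (x : Ordinal) ∈ A U} =
          {x : ↥(Set.Iio l.ord) | (x : Ordinal) ∈ A V} := congrArg Prod.fst hUV
      ext y
      constructor
      · intro hy
        have hylt : y ∈ Set.Iio l.ord := hsub U hy
        exact Set.ext_iff.1 h1 ⟨y, hylt⟩ |>.1 hy
      · intro hy
        have hylt : y ∈ Set.Iio l.ord := hsub V hy
        exact Set.ext_iff.1 h1 ⟨y, hylt⟩ |>.2 hy
    have hμ : μ U = μ V := by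
      have := congrArg (fun t : T => ((t.2.1 : I) : Cardinal.{0})) hUV
      simpa using this
    have hqeq : (U.1).map (theBij (A U) (μ U)) = (V.1).map (theBij (A V) (μ V)) := by
      have := congrArg (fun t : T => ((t.2.2 : ↥(UnLE ((t.2.1 : I) : Cardinal.{0}).ord)) :
        Ultrafilter Ordinal.{0})) hUV
      simpa using this
    apply Subtype.ext
    apply Ultrafilter.coe_injective
    apply Filter.ext
    intro S
    have e1 := mem_iff_image_mem (hne U) U.1 (hmem U) S
    have e2 := mem_iff_image_mem (hne V) V.1 (hmem V) S
    rw [hA, hμ] at e1 hqeq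
    rw [hqeq] at e1
    simp only [Ultrafilter.mem_coe]
    rw [e1, e2]
  have hN : #↥N ≤ #T := Cardinal.mk_le_of_injective hΦinj
  -- bound #T
  have hT : #T ≤ S2 := by
    have hmkT : #T = Cardinal.lift.{1,1} #(Set (↥(Set.Iio l.ord))) *
        Cardinal.lift.{1,1} #((c : I) × ↥(UnLE (c.1).ord)) := by
      rw [hTdef]; exact Cardinal.mk_prod _ _
    have hset : #(Set (↥(Set.Iio l.ord))) ≤ S2 := by
      rw [Cardinal.mk_set, Ordinal.mk_Iio_ordinal, Cardinal.card_ord]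
      have : (2 : Cardinal.{1}) ^ Cardinal.lift.{1,0} l = Cardinal.lift.{1,0} (2 ^ l) := by
        rw [Cardinal.lift_power, Cardinal.lift_two]
      rw [this, hS2def]
      exact Cardinal.lift_le.2 h2S
    have hsig : #((c : I) × ↥(UnLE (c.1).ord)) ≤ S2 := by
      rw [Cardinal.mk_sigma]
      have hterm : ∀ c : I, #↥(UnLE (c.1).ord) ≤ S2 := by
        intro c
        refine le_trans (hih c.1 c.2.1 c.2.2) ?_
        rw [hS2def]
        refine Cardinal.lift_le.2 (Order.succ_le_succ ?_)
        exact Cardinal.power_le_power_left two_ne_zero c.2.2.le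
      refine le_trans (Cardinal.sum_le_sum _ (fun _ => S2) hterm) ?_
      rw [Cardinal.sum_const']
      have hI : #I ≤ S2 := by
        have h1 : #I ≤ #↥(Set.Iio l.ord) := by
          refine Cardinal.mk_le_of_injective
            (f := fun c : I => (⟨(c.1).ord, Cardinal.ord_lt_ord.2 c.2.2⟩ : ↥(Set.Iio l.ord))) ?_
          intro c d hcd
          have h2 : (c.1).ord = (d.1).ord := congrArg Subtype.val hcd
          have h3 : c.1 = d.1 := by
            have := congrArg Ordinal.card h2
            rwa [Cardinal.card_ord, Cardinal.card_ord] at this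
          exact Subtype.ext h3
        rw [Ordinal.mk_Iio_ordinal, Cardinal.card_ord] at h1
        exact le_trans h1 (by rw [hS2def]; exact Cardinal.lift_le.2 (le_trans hlS le_rfl))
      calc #I * S2 ≤ S2 * S2 := mul_le_mul_left hI S2
      _ = S2 := Cardinal.mul_eq_self hS2inf
    calc #T = Cardinal.lift.{1,1} #(Set (↥(Set.Iio l.ord))) *
        Cardinal.lift.{1,1} #((c : I) × ↥(UnLE (c.1).ord)) := hmkT
    _ ≤ S2 * S2 := by
        rw [Cardinal.lift_id, Cardinal.lift_id]
        exact mul_le_mul' hset hsig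
    _ = S2 := Cardinal.mul_eq_self hS2inf
  calc #↥(UnLE l.ord) ≤ #↥P + #↥N := hmk
  _ ≤ S2 + S2 := by
      refine add_le_add (le_trans hP ?_) (le_trans hN hT)
      rw [hS2def]
      exact Cardinal.lift_le.2 hlS
  _ = S2 := Cardinal.add_eq_self hS2inf
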